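/- Uniform a priori bounds for the second-order convex splitting scheme: let φ^0 be a periodic grid function, set φ^{−1} := φ^0 and ψ^0 := 0, and suppose that for each k = 0, 1, ..., ℓ−1 the pair (φ^{k+1}, ψ^{k+1}) is a periodic solution of the second-order convex splitting scheme with data (φ^{k−1}, φ^k, ψ^k). Suppose C₅, C₆, C₇ > 0 are constants such that every periodic grid function u satisfies F(u) ≥ C₅·‖u‖_{2,2}² − (L_x·L_y)/4, F(u) ≥ C₆·‖u‖_∞² − (L_x·L_y)/4, and F(u) ≥ C₇·‖∇_h u‖₄² − (L_x·L_y)/4. Set M₀ := F(φ^0) + (L_x·L_y)/4. Then: (i) s·Σ_{k=0}^{ℓ−1}‖ψ^{k+1/2}‖_{−1}² + (s⁴/2)·Σ_{k=0}^{ℓ−1}‖∇_h(D_s²φ^k)‖₂² ≤ M₀, where D_s²φ^k = (φ^{k+1} − 2φ^k + φ^{k−1})/s²; (ii) max_{0 ≤ k ≤ ℓ} ‖φ^k‖_{2,2} ≤ (M₀/C₅)^{1/2}; (iii) max_{0 ≤ k ≤ ℓ} ‖φ^k‖_∞ ≤ (M₀/C₆)^{1/2}; (iv) max_{0 ≤ k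 ≤ ℓ} ‖∇_hφ^k‖₄ ≤ (M₀/C₇)^{1/2}. -/

import Mathlib

open Finset

noncomputable section

/-- Periodic grid functions on an `m × n` grid (indices taken modulo `m` and `n`). -/
abbrev Grid (m n : ℕ) := ZMod m × ZMod n → ℝ

/-- Forward difference in the `x` direction. -/
def Dx {m n : ℕ} (h : ℝ) (φ : Grid m n) : Grid m n :=
  fun p => (φ (p.1 + 1, p.2) - φ p) / h

/-- Forward difference in the `y` direction. -/
def Dy {m n : ℕ} (h : ℝ) (φ : Grid m n) : Grid m n :=
  fun p => (φ (p.1, p.2 + 1) - φ p) / h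

/-- The five-point discrete Laplacian. -/
def lapH {m n : ℕ} (h : ℝ) (φ : Grid m n) : Grid m n :=
  fun p => (φ (p.1 + 1, p.2) + φ (p.1 - 1, p.2) + φ (p.1, p.2 + 1) + φ (p.1, p.2 - 1)
    - 4 * φ p) / h ^ 2

/-- The discrete chemical potential `μ` of the second-order convex splitting scheme,
built from `φ^{k−1} = φm`, `φ^k = φk` and the unknown `φ^{k+1} = φn`. -/
def chemPot {m n : ℕ} (α h : ℝ) (φm φk φn : Grid m n) : Grid m n :=
  fun p => (φn p ^ 2 + φk p ^ 2) / 2 * ((φn p + φk p) / 2)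
    + α * ((φn p + φk p) / 2)
    + lapH h (fun q => 3 * φk q - φm q) p
    + lapH h (lapH h (fun q => (φn q + φk q) / 2)) p

/-- The second-order convex splitting scheme for the MPFC equation:
`β(ψ^{k+1} − ψ^k) = s Δₕμ − s ψ^{k+1/2}` and `φ^{k+1} − φ^k = s ψ^{k+1/2}`. -/
def Scheme {m n : ℕ} (β α s h : ℝ) (φm φk ψk φn ψn : Grid m n) : Prop :=
  (∀ p, β * (ψn p - ψk p)
      = s * lapH h (chemPot α h φm φk φn) p - s * ((ψn p + ψk p) / 2)) ∧
  (∀ p, φn p - φk p = s * ((ψn p + ψk p) / 2))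

/-- Discrete `L²` norm. -/
def norm2 {m n : ℕ} [NeZero m] [NeZero n] (h : ℝ) (φ : Grid m n) : ℝ :=
  Real.sqrt (h ^ 2 * ∑ p : ZMod m × ZMod n, φ p ^ 2)

/-- Discrete `L²` norm of the gradient. -/
def gradNorm2 {m n : ℕ} [NeZero m] [NeZero n] (h : ℝ) (φ : Grid m n) : ℝ :=
  Real.sqrt (h ^ 2 * ∑ p : ZMod m × ZMod n, (Dx h φ p ^ 2 + Dy h φ p ^ 2))

/-- Discrete `L⁴` norm. -/
def norm4 {m n : ℕ} [NeZero m] [NeZero n] (h : ℝ) (φ : Grid m n) : ℝ :=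
  (h ^ 2 * ∑ p : ZMod m × ZMod n, φ p ^ 4) ^ ((1 : ℝ) / 4)

/-- The discrete MPFC energy
`F(φ) = ¼‖φ‖₄⁴ + (α/2)‖φ‖₂² − ‖∇ₕφ‖₂² + ½‖Δₕφ‖₂²`. -/
def energyF {m n : ℕ} [NeZero m] [NeZero n] (α h : ℝ) (φ : Grid m n) : ℝ :=
  1 / 4 * norm4 h φ ^ 4 + α / 2 * norm2 h φ ^ 2 - gradNorm2 h φ ^ 2
    + 1 / 2 * norm2 h (lapH h φ) ^ 2

/-- `u` is the mean-zero periodic solution of the discrete Poisson problem `−Δₕu = ψ`;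
the "−1" norm of `ψ` is then `‖∇ₕu‖₂`. -/
def IsNegLapSol {m n : ℕ} [NeZero m] [NeZero n] (h : ℝ) (ψ u : Grid m n) : Prop :=
  (∑ p : ZMod m × ZMod n, u p = 0) ∧ ∀ p, -(lapH h u p) = ψ p

/-- The modified discrete pseudo-energy
`F̃(φ, φ̃, ψ) = F(φ) + (β/2)‖ψ‖_{−1}² + ½‖∇ₕ(φ − φ̃)‖₂²`, expressed through the
mean-zero solution `u` of `−Δₕu = ψ`, so that `‖ψ‖_{−1} = ‖∇ₕu‖₂`. -/
def Ftilde {m n : ℕ} [NeZero m] [NeZero n] (β α h : ℝ) (φ φt u : Grid m n) : ℝ :=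
  energyF α h φ + β / 2 * gradNorm2 h u ^ 2
    + 1 / 2 * gradNorm2 h (fun p => φ p - φt p) ^ 2

/-- Discrete `L⁴` norm of the gradient. -/
def gradNorm4 {m n : ℕ} [NeZero m] [NeZero n] (h : ℝ) (φ : Grid m n) : ℝ :=
  (h ^ 2 * ∑ p : ZMod m × ZMod n, (Dx h φ p ^ 4 + Dy h φ p ^ 4)) ^ ((1 : ℝ) / 4)

/-- Discrete `L^∞` norm. -/
def normInf {m n : ℕ} [NeZero m] [NeZero n] (φ : Grid m n) : ℝ :=
  ⨆ p : ZMod m × ZMod n, |φ p|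

/-- Discrete `H²` norm. -/
def norm22 {m n : ℕ} [NeZero m] [NeZero n] (h : ℝ) (φ : Grid m n) : ℝ :=
  Real.sqrt (norm2 h φ ^ 2 + gradNorm2 h φ ^ 2 + norm2 h (lapH h φ) ^ 2)

section Helpers
variable {m n : ℕ} [NeZero m] [NeZero n] (h : ℝ)

lemma sum_shift (c : ZMod m × ZMod n) (f : ZMod m × ZMod n → ℝ) :
    ∑ p : ZMod m × ZMod n, f (p + c) = ∑ p : ZMod m × ZMod n, f p :=
  Fintype.sum_equiv (Equiv.addRight c) _ _ fun _ => rfl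

lemma lapH_shift (φ : Grid m n) (p : ZMod m × ZMod n) :
    lapH h φ p = (φ (p + (1, 0)) + φ (p + (-1, 0)) + φ (p + (0, 1)) + φ (p + (0, -1))
      - 4 * φ p) / h ^ 2 := by
  have e1 : p + ((1 : ZMod m), (0 : ZMod n)) = (p.1 + 1, p.2) := by simp [Prod.ext_iff]
  have e2 : p + ((-1 : ZMod m), (0 : ZMod n)) = (p.1 - 1, p.2) := by
    simp [Prod.ext_iff, sub_eq_add_neg]
  have e3 : p + ((0 : ZMod m), (1 : ZMod n)) = (p.1, p.2 + 1) := by simp [Prod.ext_iff]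
  have e4 : p + ((0 : ZMod m), (-1 : ZMod n)) = (p.1, p.2 - 1) := by
    simp [Prod.ext_iff, sub_eq_add_neg]
  rw [lapH, e1, e2, e3, e4]

lemma shift_mul (a b : Grid m n) (c : ZMod m × ZMod n) :
    ∑ p : ZMod m × ZMod n, a (p + c) * b p = ∑ p : ZMod m × ZMod n, a p * b (p + -c) := by
  calc ∑ p : ZMod m × ZMod n, a (p + c) * b p
      = ∑ p : ZMod m × ZMod n, a (p + c) * b ((p + c) + -c) := by
        refine Finset.sum_congr rfl fun p _ => by rw [add_neg_cancel_right]
    _ = ∑ p : ZMod m × ZMod n, a p * b (p + -c) := sum_shift (c) (fun q => a q * b (q + -c))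

end Helpers

section Helpers2
set_option linter.unusedSectionVars false
variable {m n : ℕ} [NeZero m] [NeZero n] (h : ℝ)

lemma lap_mul_left (a b : Grid m n) :
    ∑ p : ZMod m × ZMod n, lapH h a p * b p
      = ((∑ p : ZMod m × ZMod n, a (p + (1,0)) * b p)
        + (∑ p : ZMod m × ZMod n, a (p + (-1,0)) * b p)
        + (∑ p : ZMod m × ZMod n, a (p + (0,1)) * b p)
        + (∑ p : ZMod m × ZMod n, a (p + (0,-1)) * b p)
        - 4 * ∑ p : ZMod m × ZMod n, a p * b p) / h ^ 2 := by
  calc ∑ p : ZMod m × ZMod n, lapH h a p * b p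
      = ∑ p : ZMod m × ZMod n, (a (p + (1,0)) * b p + a (p + (-1,0)) * b p
          + a (p + (0,1)) * b p + a (p + (0,-1)) * b p - 4 * (a p * b p)) / h ^ 2 := by
        refine Finset.sum_congr rfl fun p _ => ?_
        rw [lapH_shift]; ring
    _ = _ := by
        rw [← Finset.sum_div]
        congr 1
        rw [Finset.sum_sub_distrib, ← Finset.mul_sum, Finset.sum_add_distrib,
          Finset.sum_add_distrib, Finset.sum_add_distrib]

lemma lap_sym (a b : Grid m n) :
    ∑ p : ZMod m × ZMod n, lapH h a p * b p = ∑ p : ZMod m × ZMod n, a p * lapH h b p := by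
  have hc : ∀ x y : Grid m n, ∑ p : ZMod m × ZMod n, x p * y p
      = ∑ p : ZMod m × ZMod n, y p * x p :=
    fun x y => Finset.sum_congr rfl fun p _ => mul_comm _ _
  have rhs : ∑ p : ZMod m × ZMod n, a p * lapH h b p
      = ∑ p : ZMod m × ZMod n, lapH h b p * a p := hc a (lapH h b)
  rw [lap_mul_left, rhs, lap_mul_left,
    shift_mul b a (1,0), shift_mul b a (-1,0), shift_mul b a (0,1), shift_mul b a (0,-1)]
  have e1 : -((1 : ZMod m), (0 : ZMod n)) = ((-1 : ZMod m), (0 : ZMod n)) := by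
    simp [Prod.ext_iff]
  have e2 : -((-1 : ZMod m), (0 : ZMod n)) = ((1 : ZMod m), (0 : ZMod n)) := by
    simp [Prod.ext_iff]
  have e3 : -((0 : ZMod m), (1 : ZMod n)) = ((0 : ZMod m), (-1 : ZMod n)) := by
    simp [Prod.ext_iff]
  have e4 : -((0 : ZMod m), (-1 : ZMod n)) = ((0 : ZMod m), (1 : ZMod n)) := by
    simp [Prod.ext_iff]
  rw [e1, e2, e3, e4, hc b (fun p => a (p + (-1,0))), hc b (fun p => a (p + (1,0))),
    hc b (fun p => a (p + (0,-1))), hc b (fun p => a (p + (0,1))), hc b a]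
  ring

end Helpers2

section Helpers3
set_option linter.unusedSectionVars false
variable {m n : ℕ} [NeZero m] [NeZero n] (h : ℝ)

lemma sum_lap_zero (a : Grid m n) : ∑ p : ZMod m × ZMod n, lapH h a p = 0 := by
  calc ∑ p : ZMod m × ZMod n, lapH h a p
      = ∑ p : ZMod m × ZMod n, (a (p + (1,0)) + a (p + (-1,0)) + a (p + (0,1))
          + a (p + (0,-1)) - 4 * a p) / h ^ 2 := by
        refine Finset.sum_congr rfl fun p _ => by rw [lapH_shift]
    _ = ((∑ p : ZMod m × ZMod n, a (p + (1,0))) + (∑ p : ZMod m × ZMod n, a (p + (-1,0)))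
          + (∑ p : ZMod m × ZMod n, a (p + (0,1))) + (∑ p : ZMod m × ZMod n, a (p + (0,-1)))
          - 4 * ∑ p : ZMod m × ZMod n, a p) / h ^ 2 := by
        rw [← Finset.sum_div]
        congr 1
        rw [Finset.sum_sub_distrib, ← Finset.mul_sum, Finset.sum_add_distrib,
          Finset.sum_add_distrib, Finset.sum_add_distrib]
    _ = 0 := by
        rw [sum_shift (m := m) (n := n) (1,0) a, sum_shift (m := m) (n := n) (-1,0) a,
          sum_shift (m := m) (n := n) (0,1) a, sum_shift (m := m) (n := n) (0,-1) a]
        ring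

/-- Summation by parts: `∑ (-Δa)·b = ∑ ∇a·∇b`. -/
lemma sbp (a b : Grid m n) :
    ∑ p : ZMod m × ZMod n, -(lapH h a p) * b p
      = ∑ p : ZMod m × ZMod n, (Dx h a p * Dx h b p + Dy h a p * Dy h b p) := by
  have hx : ∀ c : ZMod m × ZMod n,
      ∑ p : ZMod m × ZMod n, (a (p + c) - a p) * (b (p + c) - b p)
        = 2 * (∑ p : ZMod m × ZMod n, a p * b p)
          - (∑ p : ZMod m × ZMod n, a (p + c) * b p)
          - (∑ p : ZMod m × ZMod n, a (p + -c) * b p) := by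
    intro c
    have h1 : ∑ p : ZMod m × ZMod n, a (p + c) * b (p + c)
        = ∑ p : ZMod m × ZMod n, a p * b p := sum_shift c (fun q => a q * b q)
    have h2 : ∑ p : ZMod m × ZMod n, a p * b (p + c)
        = ∑ p : ZMod m × ZMod n, a (p + -c) * b p := by
      rw [shift_mul a b (-c), neg_neg]
    calc ∑ p : ZMod m × ZMod n, (a (p + c) - a p) * (b (p + c) - b p)
        = ∑ p : ZMod m × ZMod n, (a (p + c) * b (p + c) + a p * b p
            - a (p + c) * b p - a p * b (p + c)) := by
          refine Finset.sum_congr rfl fun p _ => by ring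
      _ = _ := by
          rw [Finset.sum_sub_distrib, Finset.sum_sub_distrib, Finset.sum_add_distrib, h1, h2]
          ring
  have ex : ∀ p : ZMod m × ZMod n, (p.1 + 1, p.2) = p + (1,0) := fun p => by
    simp [Prod.ext_iff]
  have ey : ∀ p : ZMod m × ZMod n, (p.1, p.2 + 1) = p + (0,1) := fun p => by
    simp [Prod.ext_iff]
  calc ∑ p : ZMod m × ZMod n, -(lapH h a p) * b p
      = ∑ p : ZMod m × ZMod n, (4 * (a p * b p) - a (p + (1,0)) * b p - a (p + (-1,0)) * b p
          - a (p + (0,1)) * b p - a (p + (0,-1)) * b p) / h ^ 2 := by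
        refine Finset.sum_congr rfl fun p _ => by rw [lapH_shift]; ring
    _ = (4 * (∑ p : ZMod m × ZMod n, a p * b p) - (∑ p : ZMod m × ZMod n, a (p + (1,0)) * b p)
          - (∑ p : ZMod m × ZMod n, a (p + (-1,0)) * b p)
          - (∑ p : ZMod m × ZMod n, a (p + (0,1)) * b p)
          - (∑ p : ZMod m × ZMod n, a (p + (0,-1)) * b p)) / h ^ 2 := by
        rw [← Finset.sum_div]
        congr 1
        rw [Finset.sum_sub_distrib, Finset.sum_sub_distrib, Finset.sum_sub_distrib,
          Finset.sum_sub_distrib, ← Finset.mul_sum]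
    _ = ((∑ p : ZMod m × ZMod n, (a (p + (1,0)) - a p) * (b (p + (1,0)) - b p))
          + ∑ p : ZMod m × ZMod n, (a (p + (0,1)) - a p) * (b (p + (0,1)) - b p)) / h ^ 2 := by
        rw [hx (1,0), hx (0,1)]
        have e1 : -((1 : ZMod m), (0 : ZMod n)) = ((-1 : ZMod m), (0 : ZMod n)) := by
          simp [Prod.ext_iff]
        have e3 : -((0 : ZMod m), (1 : ZMod n)) = ((0 : ZMod m), (-1 : ZMod n)) := by
          simp [Prod.ext_iff]
        rw [e1, e3]
        ring
    _ = ∑ p : ZMod m × ZMod n, (Dx h a p * Dx h b p + Dy h a p * Dy h b p) := by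
        rw [← Finset.sum_add_distrib, Finset.sum_div]
        refine Finset.sum_congr rfl fun p _ => ?_
        rw [Dx, Dx, Dy, Dy, ex p, ey p, add_div, div_mul_div_comm, div_mul_div_comm,
          ← pow_two]

end Helpers3

/-- Unweighted squared gradient sum. -/
def G' {m n : ℕ} [NeZero m] [NeZero n] (h : ℝ) (φ : Grid m n) : ℝ :=
  ∑ p : ZMod m × ZMod n, (Dx h φ p ^ 2 + Dy h φ p ^ 2)

/-- Unweighted energy. -/
def Fr {m n : ℕ} [NeZero m] [NeZero n] (α h : ℝ) (φ : Grid m n) : ℝ :=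
  (∑ p : ZMod m × ZMod n, (φ p ^ 4 / 4 + α / 2 * φ p ^ 2 + lapH h φ p ^ 2 / 2)) - G' h φ

section Helpers4
set_option linter.unusedSectionVars false
variable {m n : ℕ} [NeZero m] [NeZero n] (h : ℝ)

lemma G'_nonneg (φ : Grid m n) : 0 ≤ G' h φ :=
  Finset.sum_nonneg fun p _ => add_nonneg (sq_nonneg _) (sq_nonneg _)

lemma sbp_self (a : Grid m n) :
    ∑ p : ZMod m × ZMod n, -(lapH h a p) * a p = G' h a := by
  rw [sbp, G']
  refine Finset.sum_congr rfl fun p _ => by ring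

end Helpers4

set_option linter.unusedSectionVars false

lemma step_identity {m n : ℕ} [NeZero m] [NeZero n] (β α s h : ℝ) (hs : s ≠ 0)
    (φm φk φn ψk ψn vk uh : Grid m n)
    (hSch : Scheme β α s h φm φk ψk φn ψn)
    (hvk : ∀ p, -(lapH h vk p) = ψk p)
    (huh : ∀ p, -(lapH h uh p) = (ψn p + ψk p) / 2) :
    Fr α h φn + β / 2 * G' h (fun p => 2 * uh p - vk p)
      + 1 / 2 * G' h (fun p => φn p - φk p)
      + s * G' h uh + 1 / 2 * G' h (fun p => φn p - 2 * φk p + φm p)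
    = Fr α h φk + β / 2 * G' h vk + 1 / 2 * G' h (fun p => φk p - φm p) := by
  obtain ⟨eq1, eq2⟩ := hSch
  -- the ψ–increment inner product telescopes the `-1` norm
  have hA : ∑ p : ZMod m × ZMod n, (ψn p - ψk p) * uh p
      = (G' h (fun p => 2 * uh p - vk p) - G' h vk) / 2 := by
    have hlin : ∀ p, ψn p - ψk p
        = -(lapH h (fun q => (2 * uh q - vk q) - vk q) p) := by
      intro p
      have l1 : lapH h (fun q => (2 * uh q - vk q) - vk q) p
          = 2 * lapH h uh p - 2 * lapH h vk p := by
        simp only [lapH]; ring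
      rw [l1]; linarith [huh p, hvk p]
    calc ∑ p : ZMod m × ZMod n, (ψn p - ψk p) * uh p
        = ∑ p : ZMod m × ZMod n, -(lapH h (fun q => (2 * uh q - vk q) - vk q) p)
            * ((fun q => ((2 * uh q - vk q) + vk q) / 2) p) := by
          refine Finset.sum_congr rfl fun p _ => ?_
          rw [← hlin p]
          congr 1
          show uh p = ((2 * uh p - vk p) + vk p) / 2
          ring
      _ = ∑ p : ZMod m × ZMod n,
            (Dx h (fun q => (2 * uh q - vk q) - vk q) p
              * Dx h (fun q => ((2 * uh q - vk q) + vk q) / 2) p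
            + Dy h (fun q => (2 * uh q - vk q) - vk q) p
              * Dy h (fun q => ((2 * uh q - vk q) + vk q) / 2) p) :=
          sbp h _ _
      _ = ∑ p : ZMod m × ZMod n,
            (((Dx h (fun q => 2 * uh q - vk q) p ^ 2 + Dy h (fun q => 2 * uh q - vk q) p ^ 2)
              - (Dx h vk p ^ 2 + Dy h vk p ^ 2)) / 2) := by
          refine Finset.sum_congr rfl fun p _ => ?_
          simp only [Dx, Dy]
          ring
      _ = (G' h (fun p => 2 * uh p - vk p) - G' h vk) / 2 := by
          rw [G', G', ← Finset.sum_sub_distrib, Finset.sum_div]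
  -- the ψ–average inner product gives the `-1` norm of ψ^{k+1/2}
  have hC : ∑ p : ZMod m × ZMod n, ((ψn p + ψk p) / 2) * uh p = G' h uh := by
    calc ∑ p : ZMod m × ZMod n, ((ψn p + ψk p) / 2) * uh p
        = ∑ p : ZMod m × ZMod n, -(lapH h uh p) * uh p := by
          refine Finset.sum_congr rfl fun p _ => by rw [huh p]
      _ = G' h uh := sbp_self h uh
  -- the chemical potential inner product
  have hB : ∑ p : ZMod m × ZMod n, lapH h (chemPot α h φm φk φn) p * uh p
      = -(1 / s) * ∑ p : ZMod m × ZMod n, chemPot α h φm φk φn p * (φn p - φk p) := by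
    rw [lap_sym, Finset.mul_sum]
    refine Finset.sum_congr rfl fun p _ => ?_
    have h1 : lapH h uh p = -((ψn p + ψk p) / 2) := by linarith [huh p]
    rw [h1, eq2 p]
    field_simp
  -- summed scheme equation
  have main : β * ((G' h (fun p => 2 * uh p - vk p) - G' h vk) / 2)
      = s * (∑ p : ZMod m × ZMod n, lapH h (chemPot α h φm φk φn) p * uh p)
        - s * G' h uh := by
    rw [← hA, ← hC, Finset.mul_sum, Finset.mul_sum, Finset.mul_sum,
      ← Finset.sum_sub_distrib]
    refine Finset.sum_congr rfl fun p _ => ?_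
    linear_combination uh p * eq1 p
  -- expand the chemical potential inner product
  have hsplit : ∑ p : ZMod m × ZMod n, chemPot α h φm φk φn p * (φn p - φk p)
      = (∑ p : ZMod m × ZMod n, ((φn p ^ 2 + φk p ^ 2) / 2 * ((φn p + φk p) / 2)) * (φn p - φk p))
        + (∑ p : ZMod m × ZMod n, (α * ((φn p + φk p) / 2)) * (φn p - φk p))
        + (∑ p : ZMod m × ZMod n, lapH h (fun q => 3 * φk q - φm q) p * (φn p - φk p))
        + (∑ p : ZMod m × ZMod n,
            lapH h (lapH h (fun q => (φn q + φk q) / 2)) p * (φn p - φk p)) := by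
    rw [← Finset.sum_add_distrib, ← Finset.sum_add_distrib, ← Finset.sum_add_distrib]
    refine Finset.sum_congr rfl fun p _ => ?_
    rw [chemPot]
    ring
  have hD1 : ∑ p : ZMod m × ZMod n,
        ((φn p ^ 2 + φk p ^ 2) / 2 * ((φn p + φk p) / 2)) * (φn p - φk p)
      = (∑ p : ZMod m × ZMod n, φn p ^ 4 / 4) - ∑ p : ZMod m × ZMod n, φk p ^ 4 / 4 := by
    rw [← Finset.sum_sub_distrib]
    exact Finset.sum_congr rfl fun p _ => by ring
  have hD2 : ∑ p : ZMod m × ZMod n, (α * ((φn p + φk p) / 2)) * (φn p - φk p)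
      = (∑ p : ZMod m × ZMod n, α / 2 * φn p ^ 2)
        - ∑ p : ZMod m × ZMod n, α / 2 * φk p ^ 2 := by
    rw [← Finset.sum_sub_distrib]
    exact Finset.sum_congr rfl fun p _ => by ring
  have hD3 : ∑ p : ZMod m × ZMod n, lapH h (fun q => 3 * φk q - φm q) p * (φn p - φk p)
      = -(G' h φn - G' h φk - 1 / 2 * G' h (fun p => φn p - φk p)
          + 1 / 2 * G' h (fun p => φk p - φm p)
          - 1 / 2 * G' h (fun p => φn p - 2 * φk p + φm p)) := by
    have step1 : ∑ p : ZMod m × ZMod n, lapH h (fun q => 3 * φk q - φm q) p * (φn p - φk p)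
        = -∑ p : ZMod m × ZMod n,
            (Dx h (fun q => 3 * φk q - φm q) p * Dx h (fun q => φn q - φk q) p
            + Dy h (fun q => 3 * φk q - φm q) p * Dy h (fun q => φn q - φk q) p) := by
      rw [← sbp, ← Finset.sum_neg_distrib]
      refine Finset.sum_congr rfl fun p _ => ?_
      show lapH h (fun q => 3 * φk q - φm q) p * (φn p - φk p)
        = -(-(lapH h (fun q => 3 * φk q - φm q) p) * (φn p - φk p))
      ring
    rw [step1]
    have step2 : ∑ p : ZMod m × ZMod n,
          (Dx h (fun q => 3 * φk q - φm q) p * Dx h (fun q => φn q - φk q) p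
          + Dy h (fun q => 3 * φk q - φm q) p * Dy h (fun q => φn q - φk q) p)
        = ∑ p : ZMod m × ZMod n,
            ((Dx h φn p ^ 2 + Dy h φn p ^ 2) - (Dx h φk p ^ 2 + Dy h φk p ^ 2)
            - 1 / 2 * (Dx h (fun q => φn q - φk q) p ^ 2 + Dy h (fun q => φn q - φk q) p ^ 2)
            + 1 / 2 * (Dx h (fun q => φk q - φm q) p ^ 2 + Dy h (fun q => φk q - φm q) p ^ 2)
            - 1 / 2 * (Dx h (fun q => φn q - 2 * φk q + φm q) p ^ 2
                + Dy h (fun q => φn q - 2 * φk q + φm q) p ^ 2)) := by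
      refine Finset.sum_congr rfl fun p _ => ?_
      simp only [Dx, Dy]
      ring
    rw [step2]
    simp only [Finset.sum_sub_distrib, Finset.sum_add_distrib, ← Finset.mul_sum]
    rw [G', G', G', G', G']
    simp only [Finset.sum_add_distrib]
  have hD4 : ∑ p : ZMod m × ZMod n,
        lapH h (lapH h (fun q => (φn q + φk q) / 2)) p * (φn p - φk p)
      = (∑ p : ZMod m × ZMod n, lapH h φn p ^ 2 / 2)
        - ∑ p : ZMod m × ZMod n, lapH h φk p ^ 2 / 2 := by
    have step1 : ∑ p : ZMod m × ZMod n,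
          lapH h (lapH h (fun q => (φn q + φk q) / 2)) p * (φn p - φk p)
        = ∑ p : ZMod m × ZMod n,
            lapH h (fun q => (φn q + φk q) / 2) p * lapH h (fun q => φn q - φk q) p :=
      lap_sym h (lapH h (fun q => (φn q + φk q) / 2)) (fun q => φn q - φk q)
    rw [step1, ← Finset.sum_sub_distrib]
    refine Finset.sum_congr rfl fun p _ => ?_
    simp only [lapH]
    ring
  have hFrn : Fr α h φn = (∑ p : ZMod m × ZMod n, φn p ^ 4 / 4)
      + (∑ p : ZMod m × ZMod n, α / 2 * φn p ^ 2)
      + (∑ p : ZMod m × ZMod n, lapH h φn p ^ 2 / 2) - G' h φn := by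
    rw [Fr, Finset.sum_add_distrib, Finset.sum_add_distrib]
  have hFrk : Fr α h φk = (∑ p : ZMod m × ZMod n, φk p ^ 4 / 4)
      + (∑ p : ZMod m × ZMod n, α / 2 * φk p ^ 2)
      + (∑ p : ZMod m × ZMod n, lapH h φk p ^ 2 / 2) - G' h φk := by
    rw [Fr, Finset.sum_add_distrib, Finset.sum_add_distrib]
  have hD : ∑ p : ZMod m × ZMod n, chemPot α h φm φk φn p * (φn p - φk p)
      = (Fr α h φn - Fr α h φk) + 1 / 2 * G' h (fun p => φn p - φk p)
        - 1 / 2 * G' h (fun p => φk p - φm p)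
        + 1 / 2 * G' h (fun p => φn p - 2 * φk p + φm p) := by
    rw [hsplit, hD1, hD2, hD3, hD4, hFrn, hFrk]
    ring
  have hss : s * (-(1 / s) * ∑ p : ZMod m × ZMod n, chemPot α h φm φk φn p * (φn p - φk p))
      = -∑ p : ZMod m × ZMod n, chemPot α h φm φk φn p * (φn p - φk p) := by
    field_simp
  rw [hB, hss] at main
  rw [hD] at main
  linarith [main]

section Helpers5
set_option linter.unusedSectionVars false
variable {m n : ℕ} [NeZero m] [NeZero n] (h : ℝ)

lemma norm2_sq (φ : Grid m n) : norm2 h φ ^ 2 = h ^ 2 * ∑ p : ZMod m × ZMod n, φ p ^ 2 := by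
  rw [norm2, Real.sq_sqrt (by positivity)]

lemma gradNorm2_sq (φ : Grid m n) : gradNorm2 h φ ^ 2 = h ^ 2 * G' h φ := by
  rw [gradNorm2, Real.sq_sqrt (by positivity)]; rfl

lemma norm4_pow (φ : Grid m n) :
    norm4 h φ ^ 4 = h ^ 2 * ∑ p : ZMod m × ZMod n, φ p ^ 4 := by
  have hx : (0:ℝ) ≤ h ^ 2 * ∑ p : ZMod m × ZMod n, φ p ^ 4 := by positivity
  rw [norm4, ← Real.rpow_natCast (_ ^ ((1:ℝ)/4)) 4, ← Real.rpow_mul hx]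
  norm_num

lemma energyF_eq (α : ℝ) (φ : Grid m n) : energyF α h φ = h ^ 2 * Fr α h φ := by
  rw [energyF, norm4_pow, norm2_sq, gradNorm2_sq, norm2_sq, Fr,
    Finset.sum_add_distrib, Finset.sum_add_distrib, ← Finset.sum_div, ← Finset.sum_div,
    ← Finset.mul_sum]
  ring

lemma poisson_solve (hh : h ≠ 0) (ψg : Grid m n)
    (hmean : ∑ p : ZMod m × ZMod n, ψg p = 0) :
    ∃ u : Grid m n, (∑ p : ZMod m × ZMod n, u p = 0) ∧ ∀ p, -(lapH h u p) = ψg p := by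
  classical
  let sumL : Grid m n →ₗ[ℝ] ℝ :=
    { toFun := fun f => ∑ p : ZMod m × ZMod n, f p
      map_add' := fun f g => by simp [Finset.sum_add_distrib]
      map_smul' := fun c f => by simp [Finset.mul_sum] }
  let L0 : Grid m n →ₗ[ℝ] Grid m n :=
    { toFun := fun f p => -(lapH h f p)
      map_add' := fun f g => by funext p; simp only [lapH, Pi.add_apply]; ring
      map_smul' := fun c f => by
        funext p
        simp only [lapH, Pi.smul_apply, smul_eq_mul, RingHom.id_apply]
        ring }
  have hmem : ∀ f, L0 f ∈ LinearMap.ker sumL := by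
    intro f
    rw [LinearMap.mem_ker]
    show ∑ p : ZMod m × ZMod n, -(lapH h f p) = 0
    rw [Finset.sum_neg_distrib, sum_lap_zero]
    ring
  let L : LinearMap.ker sumL →ₗ[ℝ] LinearMap.ker sumL :=
    L0.restrict (fun f _ => hmem f)
  have hker : ∀ z : LinearMap.ker sumL, L z = 0 → z = 0 := by
    intro z hz
    have hz' : ∀ p, -(lapH h (z : Grid m n) p) = 0 := by
      intro p
      have h1 : ((L z : LinearMap.ker sumL) : Grid m n) p = 0 := by rw [hz]; rfl
      exact h1
    have hG : G' h (z : Grid m n) = 0 := by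
      rw [← sbp_self]
      exact Finset.sum_eq_zero fun p _ => by rw [hz' p, zero_mul]
    have hDxy : ∀ p : ZMod m × ZMod n,
        Dx h (z : Grid m n) p = 0 ∧ Dy h (z : Grid m n) p = 0 := by
      intro p
      have h0 := (Finset.sum_eq_zero_iff_of_nonneg
        (fun p _ => add_nonneg (sq_nonneg (Dx h (z : Grid m n) p))
          (sq_nonneg (Dy h (z : Grid m n) p)))).mp hG p (Finset.mem_univ p)
      constructor
      · have : Dx h (z : Grid m n) p ^ 2 = 0 := by nlinarith [sq_nonneg (Dy h (z : Grid m n) p), sq_nonneg (Dx h (z : Grid m n) p)]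
        exact pow_eq_zero_iff two_ne_zero |>.mp this
      · have : Dy h (z : Grid m n) p ^ 2 = 0 := by nlinarith [sq_nonneg (Dy h (z : Grid m n) p), sq_nonneg (Dx h (z : Grid m n) p)]
        exact pow_eq_zero_iff two_ne_zero |>.mp this
    have hstepx : ∀ p : ZMod m × ZMod n, (z : Grid m n) (p.1 + 1, p.2) = (z : Grid m n) p := by
      intro p
      have h1 := (hDxy p).1
      rw [Dx, div_eq_zero_iff] at h1
      rcases h1 with h1 | h1
      · linarith
      · exact absurd h1 hh
    have hstepy : ∀ p : ZMod m × ZMod n, (z : Grid m n) (p.1, p.2 + 1) = (z : Grid m n) p := by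
      intro p
      have h1 := (hDxy p).2
      rw [Dy, div_eq_zero_iff] at h1
      rcases h1 with h1 | h1
      · linarith
      · exact absurd h1 hh
    have hconstx : ∀ (a : ℕ) (j : ZMod n), (z : Grid m n) ((a : ZMod m), j)
        = (z : Grid m n) (0, j) := by
      intro a j
      induction a with
      | zero => norm_num
      | succ a ih =>
          push_cast
          have h1 := hstepx ((a : ZMod m), j)
          simp only at h1
          rw [h1, ih]
    have hconsty : ∀ (b : ℕ) (i : ZMod m), (z : Grid m n) (i, (b : ZMod n))
        = (z : Grid m n) (i, 0) := by
      intro b i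
      induction b with
      | zero => norm_num
      | succ b ih =>
          push_cast
          have h1 := hstepy (i, (b : ZMod n))
          simp only at h1
          rw [h1, ih]
    have hconst : ∀ p : ZMod m × ZMod n, (z : Grid m n) p = (z : Grid m n) (0, 0) := by
      intro p
      obtain ⟨i, j⟩ := p
      have hi : ((i.val : ℕ) : ZMod m) = i := by rw [ZMod.natCast_val, ZMod.cast_id]
      have hj : ((j.val : ℕ) : ZMod n) = j := by rw [ZMod.natCast_val, ZMod.cast_id]
      rw [← hi, ← hj, hconstx i.val, hconsty j.val]
    have hsum0 : ∑ p : ZMod m × ZMod n, (z : Grid m n) p = 0 := z.2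
    have hcard : ∑ p : ZMod m × ZMod n, (z : Grid m n) p
        = (Fintype.card (ZMod m × ZMod n) : ℝ) * (z : Grid m n) (0, 0) := by
      rw [Finset.sum_congr rfl fun p _ => hconst p, Finset.sum_const, nsmul_eq_mul,
        Finset.card_univ]
    have hzero : (z : Grid m n) (0, 0) = 0 := by
      have hcne : (Fintype.card (ZMod m × ZMod n) : ℝ) ≠ 0 :=
        Nat.cast_ne_zero.mpr Fintype.card_ne_zero
      rw [hcard] at hsum0
      exact (mul_eq_zero.mp hsum0).resolve_left hcne
    ext p
    rw [hconst p, hzero]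
    rfl
  have hinj : Function.Injective L := by
    intro x y hxy
    have hz : L (x - y) = 0 := by rw [map_sub, hxy, sub_self]
    exact sub_eq_zero.mp (hker (x - y) hz)
  have hsurj : Function.Surjective L := LinearMap.surjective_of_injective hinj
  have hψmem : ψg ∈ LinearMap.ker sumL := by
    rw [LinearMap.mem_ker]
    exact hmean
  obtain ⟨u, hu⟩ := hsurj ⟨ψg, hψmem⟩
  refine ⟨(u : Grid m n), u.2, fun p => ?_⟩
  have h1 : ((L u : LinearMap.ker sumL) : Grid m n) p = ψg p := by rw [hu]
  exact h1

section Helpers6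
set_option linter.unusedSectionVars false
variable {m n : ℕ} [NeZero m] [NeZero n]

lemma bound_of_sq (x M C : ℝ) (hC : 0 < C) (hx : C * x ^ 2 ≤ M) :
    x ≤ Real.sqrt (M / C) := by
  have h1 : x ^ 2 ≤ M / C := (le_div_iff₀ hC).mpr (by linarith)
  calc x ≤ |x| := le_abs_self x
    _ = Real.sqrt (x ^ 2) := (Real.sqrt_sq_eq_abs x).symm
    _ ≤ _ := Real.sqrt_le_sqrt h1

lemma psi_sum_step (β α s h : ℝ) (hβ : 0 < β) (hs : 0 < s)
    (φm φk ψk φn ψn : Grid m n) (hSch : Scheme β α s h φm φk ψk φn ψn)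
    (hk : ∑ p : ZMod m × ZMod n, ψk p = 0) : ∑ p : ZMod m × ZMod n, ψn p = 0 := by
  have hsum : ∑ p : ZMod m × ZMod n, β * (ψn p - ψk p)
      = ∑ p : ZMod m × ZMod n,
          (s * lapH h (chemPot α h φm φk φn) p - s * ((ψn p + ψk p) / 2)) :=
    Finset.sum_congr rfl fun p _ => hSch.1 p
  rw [← Finset.mul_sum, Finset.sum_sub_distrib, Finset.sum_sub_distrib, ← Finset.mul_sum,
    ← Finset.mul_sum, sum_lap_zero, ← Finset.sum_div, Finset.sum_add_distrib, hk] at hsum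
  have h2 : (β + s / 2) * ∑ p : ZMod m × ZMod n, ψn p = 0 := by linarith
  rcases mul_eq_zero.mp h2 with h3 | h3
  · linarith
  · exact h3

end Helpers6

lemma master {m n : ℕ} [NeZero m] [NeZero n] (β α s h : ℝ) (hβ : 0 < β) (hs : 0 < s)
    (ℓ : ℕ) (φ ψ : ℕ → Grid m n) (hψ0 : ψ 0 = fun _ => 0)
    (hScheme : ∀ k < ℓ, Scheme β α s h (φ (k - 1)) (φ k) (ψ k) (φ (k + 1)) (ψ (k + 1)))
    (uhalf : ℕ → Grid m n)
    (H : ∀ k < ℓ, IsNegLapSol h (fun p => (ψ (k + 1) p + ψ k p) / 2) (uhalf k)) :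
    (∀ k ≤ ℓ, Fr α h (φ k) ≤ Fr α h (φ 0)) ∧
    (s * ∑ k ∈ Finset.range ℓ, G' h (uhalf k)
      + 1 / 2 * ∑ k ∈ Finset.range ℓ,
          G' h (fun p => φ (k + 1) p - 2 * φ k p + φ (k - 1) p)
      + Fr α h (φ ℓ) ≤ Fr α h (φ 0)) := by
  classical
  obtain ⟨v, hv0, hvs⟩ : ∃ v : ℕ → Grid m n, v 0 = (fun _ => 0) ∧
      ∀ k, v (k + 1) = fun p => 2 * uhalf k p - v k p :=
    ⟨fun k => Nat.rec (motive := fun _ => Grid m n) (fun _ => 0)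
      (fun k vk => fun p => 2 * uhalf k p - vk p) k, rfl, fun k => rfl⟩
  have hvψ : ∀ k, k ≤ ℓ → ∀ p, -(lapH h (v k) p) = ψ k p := by
    intro k
    induction k with
    | zero =>
        intro _ p
        rw [hψ0, hv0]
        simp [lapH]
    | succ k ih =>
        intro hk p
        have hkℓ : k < ℓ := lt_of_lt_of_le (Nat.lt_succ_self k) hk
        have l1 : lapH h (v (k + 1)) p = 2 * lapH h (uhalf k) p - lapH h (v k) p := by
          rw [hvs k]; simp only [lapH]; ring
        have h1 := (H k hkℓ).2 p
        have h2 := ih hkℓ.le p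
        rw [l1]
        simp only at h1
        linarith
  obtain ⟨E, hE⟩ : ∃ E : ℕ → ℝ, ∀ k, E k = Fr α h (φ k) + β / 2 * G' h (v k)
      + 1 / 2 * G' h (fun p => φ k p - φ (k - 1) p) := ⟨_, fun _ => rfl⟩
  have hstep : ∀ k, k < ℓ → E (k + 1) + s * G' h (uhalf k)
      + 1 / 2 * G' h (fun p => φ (k + 1) p - 2 * φ k p + φ (k - 1) p) = E k := by
    intro k hk
    have hid := step_identity β α s h hs.ne' (φ (k - 1)) (φ k) (φ (k + 1)) (ψ k) (ψ (k + 1))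
      (v k) (uhalf k) (hScheme k hk) (hvψ k hk.le) (fun p => (H k hk).2 p)
    rw [hE (k + 1), hE k]
    simp only [Nat.add_sub_cancel]
    rw [hvs k]
    linarith [hid]
  have hG'nn : ∀ w : Grid m n, 0 ≤ G' h w := G'_nonneg h
  have htel : ∀ j, j ≤ ℓ → E j + (s * ∑ k ∈ Finset.range j, G' h (uhalf k)
      + 1 / 2 * ∑ k ∈ Finset.range j,
          G' h (fun p => φ (k + 1) p - 2 * φ k p + φ (k - 1) p)) = E 0 := by
    intro j
    induction j with
    | zero => intro _; simp
    | succ j ih =>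
        intro hj
        rw [Finset.sum_range_succ, Finset.sum_range_succ]
        have h1 := hstep j (lt_of_lt_of_le (Nat.lt_succ_self j) hj)
        have h2 := ih (by omega)
        linarith
  have hE0 : E 0 = Fr α h (φ 0) := by
    have g1 : G' h (v 0) = 0 := by
      rw [hv0]
      simp [G', Dx, Dy]
    have g2 : G' h (fun p => φ 0 p - φ (0 - 1) p) = 0 := by
      show G' h (fun p => φ 0 p - φ 0 p) = 0
      simp [G', Dx, Dy]
    rw [hE 0, g1, g2]
    ring
  have hsums_nn : ∀ j, 0 ≤ s * ∑ k ∈ Finset.range j, G' h (uhalf k)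
      + 1 / 2 * ∑ k ∈ Finset.range j,
          G' h (fun p => φ (k + 1) p - 2 * φ k p + φ (k - 1) p) := by
    intro j
    have t1 : 0 ≤ ∑ k ∈ Finset.range j, G' h (uhalf k) :=
      Finset.sum_nonneg fun k _ => hG'nn _
    have t2 : 0 ≤ ∑ k ∈ Finset.range j,
        G' h (fun p => φ (k + 1) p - 2 * φ k p + φ (k - 1) p) :=
      Finset.sum_nonneg fun k _ => hG'nn _
    nlinarith
  have hEk : ∀ k ≤ ℓ, E k ≤ Fr α h (φ 0) := by
    intro k hk
    have h1 := htel k hk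
    have t1 : 0 ≤ ∑ k' ∈ Finset.range k, G' h (uhalf k') :=
      Finset.sum_nonneg fun _ _ => hG'nn _
    have t2 : 0 ≤ ∑ k' ∈ Finset.range k,
        G' h (fun p => φ (k' + 1) p - 2 * φ k' p + φ (k' - 1) p) :=
      Finset.sum_nonneg fun _ _ => hG'nn _
    rw [hE0] at h1
    nlinarith [mul_nonneg hs.le t1]
  have hFrE : ∀ k, Fr α h (φ k) ≤ E k := by
    intro k
    have t1 := hG'nn (v k)
    have t2 := hG'nn (fun p => φ k p - φ (k - 1) p)
    rw [hE k]
    nlinarith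
  refine ⟨fun k hk => le_trans (hFrE k) (hEk k hk), ?_⟩
  have h1 := htel ℓ le_rfl
  have h2 := hFrE ℓ
  linarith [hE0]


/-- Uniform a priori bounds for the second-order convex splitting scheme, with
initializations `φ^{−1} := φ^0` (encoded by truncated subtraction `φ (k-1)`) and
`ψ^0 := 0`, and `M₀ := F(φ^0) + Lx·Ly/4` where `Lx = m·h`, `Ly = n·h`. -/
theorem scheme_uniform_bounds (m n : ℕ) [NeZero m] [NeZero n]
    (β α s h : ℝ) (hβ : 0 < β) (hα : 0 < α) (hs : 0 < s) (hh : 0 < h)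
    (ℓ : ℕ) (φ ψ : ℕ → Grid m n)
    (hψ0 : ψ 0 = fun _ => 0)
    (hScheme : ∀ k < ℓ, Scheme β α s h (φ (k - 1)) (φ k) (ψ k) (φ (k + 1)) (ψ (k + 1)))
    (C₅ C₆ C₇ : ℝ) (hC₅ : 0 < C₅) (hC₆ : 0 < C₆) (hC₇ : 0 < C₇)
    (hcoer₅ : ∀ u : Grid m n,
      energyF α h u ≥ C₅ * norm22 h u ^ 2 - ((m : ℝ) * h) * ((n : ℝ) * h) / 4)
    (hcoer₆ : ∀ u : Grid m n,
      energyF α h u ≥ C₆ * normInf u ^ 2 - ((m : ℝ) * h) * ((n : ℝ) * h) / 4)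
    (hcoer₇ : ∀ u : Grid m n,
      energyF α h u ≥ C₇ * gradNorm4 h u ^ 2 - ((m : ℝ) * h) * ((n : ℝ) * h) / 4) :
    (∀ uhalf : ℕ → Grid m n,
      (∀ k < ℓ, IsNegLapSol h (fun p => (ψ (k + 1) p + ψ k p) / 2) (uhalf k)) →
      s * ∑ k ∈ Finset.range ℓ, gradNorm2 h (uhalf k) ^ 2
          + s ^ 4 / 2 * ∑ k ∈ Finset.range ℓ,
              gradNorm2 h (fun p => (φ (k + 1) p - 2 * φ k p + φ (k - 1) p) / s ^ 2) ^ 2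
        ≤ energyF α h (φ 0) + ((m : ℝ) * h) * ((n : ℝ) * h) / 4) ∧
    (∀ k ≤ ℓ, norm22 h (φ k)
      ≤ Real.sqrt ((energyF α h (φ 0) + ((m : ℝ) * h) * ((n : ℝ) * h) / 4) / C₅)) ∧
    (∀ k ≤ ℓ, normInf (φ k)
      ≤ Real.sqrt ((energyF α h (φ 0) + ((m : ℝ) * h) * ((n : ℝ) * h) / 4) / C₆)) ∧
    (∀ k ≤ ℓ, gradNorm4 h (φ k)
      ≤ Real.sqrt ((energyF α h (φ 0) + ((m : ℝ) * h) * ((n : ℝ) * h) / 4) / C₇)) := by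
  classical
  have hFlow : ∀ u : Grid m n,
      -(((m : ℝ) * h) * ((n : ℝ) * h) / 4) ≤ energyF α h u := by
    intro u
    have h1 := hcoer₅ u
    have h2 : 0 ≤ C₅ * norm22 h u ^ 2 := mul_nonneg hC₅.le (sq_nonneg _)
    linarith
  -- part (i)
  have parti : ∀ uhalf : ℕ → Grid m n,
      (∀ k < ℓ, IsNegLapSol h (fun p => (ψ (k + 1) p + ψ k p) / 2) (uhalf k)) →
      s * ∑ k ∈ Finset.range ℓ, gradNorm2 h (uhalf k) ^ 2
          + s ^ 4 / 2 * ∑ k ∈ Finset.range ℓ,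
              gradNorm2 h (fun p => (φ (k + 1) p - 2 * φ k p + φ (k - 1) p) / s ^ 2) ^ 2
        ≤ energyF α h (φ 0) + ((m : ℝ) * h) * ((n : ℝ) * h) / 4 := by
    intro uhalf H
    obtain ⟨-, hb⟩ := master β α s h hβ hs ℓ φ ψ hψ0 hScheme uhalf H
    have hscale : ∀ w : Grid m n, G' h (fun p => w p / s ^ 2) = G' h w / s ^ 4 := by
      intro w
      rw [G', G', Finset.sum_div]
      refine Finset.sum_congr rfl fun p _ => ?_
      simp only [Dx, Dy]
      ring
    have e1 : ∑ k ∈ Finset.range ℓ, gradNorm2 h (uhalf k) ^ 2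
        = h ^ 2 * ∑ k ∈ Finset.range ℓ, G' h (uhalf k) := by
      rw [Finset.mul_sum]
      exact Finset.sum_congr rfl fun k _ => gradNorm2_sq h (uhalf k)
    have e2 : ∑ k ∈ Finset.range ℓ,
          gradNorm2 h (fun p => (φ (k + 1) p - 2 * φ k p + φ (k - 1) p) / s ^ 2) ^ 2
        = h ^ 2 / s ^ 4 * ∑ k ∈ Finset.range ℓ,
            G' h (fun p => φ (k + 1) p - 2 * φ k p + φ (k - 1) p) := by
      rw [Finset.mul_sum]
      refine Finset.sum_congr rfl fun k _ => ?_
      rw [gradNorm2_sq, hscale]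
      ring
    rw [e1, e2]
    have hb2 : s * ∑ k ∈ Finset.range ℓ, G' h (uhalf k)
        + 1 / 2 * ∑ k ∈ Finset.range ℓ,
            G' h (fun p => φ (k + 1) p - 2 * φ k p + φ (k - 1) p)
        ≤ Fr α h (φ 0) - Fr α h (φ ℓ) := by linarith
    have hmul := mul_le_mul_of_nonneg_left hb2 (sq_nonneg h)
    have hFℓ := hFlow (φ ℓ)
    rw [energyF_eq] at hFℓ ⊢
    have hs4 : s ^ 4 / 2 * (h ^ 2 / s ^ 4 * ∑ k ∈ Finset.range ℓ,
          G' h (fun p => φ (k + 1) p - 2 * φ k p + φ (k - 1) p))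
        = h ^ 2 * (1 / 2 * ∑ k ∈ Finset.range ℓ,
            G' h (fun p => φ (k + 1) p - 2 * φ k p + φ (k - 1) p)) := by
      have hs0 : s ≠ 0 := hs.ne'
      field_simp
    rw [hs4]
    nlinarith [hmul]
  refine ⟨parti, ?_⟩
  -- construct Poisson solutions
  have hψmean : ∀ k ≤ ℓ, ∑ p : ZMod m × ZMod n, ψ k p = 0 := by
    intro k
    induction k with
    | zero => intro _; rw [hψ0]; simp
    | succ k ih =>
        intro hk
        have hkℓ : k < ℓ := lt_of_lt_of_le (Nat.lt_succ_self k) hk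
        exact psi_sum_step β α s h hβ hs _ _ _ _ _ (hScheme k hkℓ) (ih hkℓ.le)
  have hex : ∀ k, ∃ u : Grid m n,
      k < ℓ → IsNegLapSol h (fun p => (ψ (k + 1) p + ψ k p) / 2) u := by
    intro k
    by_cases hk : k < ℓ
    · have hmean : ∑ p : ZMod m × ZMod n, ((ψ (k + 1) p + ψ k p) / 2) = 0 := by
        rw [← Finset.sum_div, Finset.sum_add_distrib, hψmean (k + 1) hk, hψmean k hk.le]
        norm_num
      obtain ⟨u, hu1, hu2⟩ := poisson_solve h hh.ne' _ hmean
      exact ⟨u, fun _ => ⟨hu1, hu2⟩⟩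
    · exact ⟨0, fun hc => absurd hc hk⟩
  choose uhalfD hD using hex
  obtain ⟨ha, -⟩ := master β α s h hβ hs ℓ φ ψ hψ0 hScheme uhalfD (fun k hk => hD k hk)
  have hFk : ∀ k ≤ ℓ, energyF α h (φ k) ≤ energyF α h (φ 0) := by
    intro k hk
    rw [energyF_eq, energyF_eq]
    exact mul_le_mul_of_nonneg_left (ha k hk) (sq_nonneg h)
  refine ⟨?_, ?_, ?_⟩
  · intro k hk
    refine bound_of_sq _ _ _ hC₅ ?_
    have := hcoer₅ (φ k)
    have := hFk k hk
    linarith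
  · intro k hk
    refine bound_of_sq _ _ _ hC₆ ?_
    have := hcoer₆ (φ k)
    have := hFk k hk
    linarith
  · intro k hk
    refine bound_of_sq _ _ _ hC₇ ?_
    have := hcoer₇ (φ k)
    have := hFk k hk
    linarith
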